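/- Let X_1, ..., X_D be independent square-integrable real-valued random variables (representing feature components), let g_1, ..., g_D be measurable real-valued functions with each g_j(X_j) square-integrable, let the additive model output be f = Σ_{j=1}^{D} g_j(X_j), and let Y be a square-integrable real-valued target random variable. Let X_1' have the same distribution as X_1 and be independent of (X_1, ..., X_D, Y). Then the expected importance score of feature 1, defined as E[(Y - (g_1(X_1') + Σ_{j=2}^{D} g_j(X_j)))^2] - E[(Y - Σ_{j=1}^{D} g_j(X_j))^2], equals 2*[cov(Y, g_1(X_1)) - Σ_{j=2}^{D} cov(g_1(X_1), g_j(X_j))], where cov denotes covariance. -/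

import Mathlib

open MeasureTheory ProbabilityTheory Finset

/-- Covariance of two real-valued random variables w.r.t. a measure `μ`. -/
noncomputable def cov {Ω : Type*} [MeasurableSpace Ω] (μ : Measure Ω) (X Y : Ω → ℝ) : ℝ :=
  ∫ ω, (X ω - ∫ ω', X ω' ∂μ) * (Y ω - ∫ ω', Y ω' ∂μ) ∂μ

lemma memL2_integrable_mul {Ω : Type*} [MeasurableSpace Ω] {μ : Measure Ω} {f g : Ω → ℝ}
    (hf : MemLp f 2 μ) (hg : MemLp g 2 μ) : Integrable (fun ω => f ω * g ω) μ := by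
  have : ENNReal.HolderTriple 2 2 1 := ⟨by
    rw [inv_one]
    exact ENNReal.inv_two_add_inv_two⟩
  have h : MemLp (g • f) 1 μ := hf.smul hg
  rw [memLp_one_iff_integrable] at h
  exact (by simpa [smul_eq_mul, mul_comm] using h : Integrable (f * g) μ)

lemma cov_eq {Ω : Type*} [MeasurableSpace Ω] {μ : Measure Ω} [IsProbabilityMeasure μ]
    {f g : Ω → ℝ} (hf : MemLp f 2 μ) (hg : MemLp g 2 μ) :
    cov μ f g = (∫ ω, f ω * g ω ∂μ) - (∫ ω, f ω ∂μ) * (∫ ω, g ω ∂μ) := by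
  have hfi : Integrable f μ := hf.integrable (by norm_num)
  have hgi : Integrable g μ := hg.integrable (by norm_num)
  have hfgi := memL2_integrable_mul hf hg
  unfold cov
  have : ∀ ω, (f ω - ∫ ω', f ω' ∂μ) * (g ω - ∫ ω', g ω' ∂μ)
      = f ω * g ω - (∫ ω', f ω' ∂μ) * g ω - (∫ ω', g ω' ∂μ) * f ω
        + (∫ ω', f ω' ∂μ) * (∫ ω', g ω' ∂μ) := by intro ω; ring
  simp_rw [this]
  have h2 : Integrable (fun ω => (∫ ω', f ω' ∂μ) * g ω) μ := hgi.const_mul _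
  have h3 : Integrable (fun ω => (∫ ω', g ω' ∂μ) * f ω) μ := hfi.const_mul _
  have h4 : Integrable (fun ω => f ω * g ω - (∫ ω', f ω' ∂μ) * g ω) μ := hfgi.sub h2
  have h1 : Integrable
      (fun ω => f ω * g ω - (∫ ω', f ω' ∂μ) * g ω - (∫ ω', g ω' ∂μ) * f ω) μ := h4.sub h3
  rw [integral_add h1 (integrable_const _), integral_sub h4 h3, integral_sub hfgi h2,
      integral_const_mul, integral_const_mul, integral_const]
  simp [measure_univ]
  ring

/-- Permutation importance of feature `0` in an additive model `f = Σ_j g_j (X j)` over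
independent features: replacing `X 0` by an independent copy `X₁'` changes the expected
quadratic loss against the target `Y` by
`2 * (cov(Y, g 0 (X 0)) - Σ_{j ≠ 0} cov(g 0 (X 0), g j (X j)))`. -/
theorem expected_importance_score_additive
    {Ω : Type*} [MeasurableSpace Ω] (μ : Measure Ω) [IsProbabilityMeasure μ]
    (D : ℕ) [NeZero D]
    (X : Fin D → Ω → ℝ) (hXmeas : ∀ j, Measurable (X j))
    (hXL2 : ∀ j, MemLp (X j) 2 μ)
    (hXindep : iIndepFun X μ)
    (g : Fin D → ℝ → ℝ) (hgmeas : ∀ j, Measurable (g j))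
    (hgL2 : ∀ j, MemLp (fun ω => g j (X j ω)) 2 μ)
    (Y : Ω → ℝ) (hY : MemLp Y 2 μ)
    (X₁' : Ω → ℝ) (hX₁'meas : Measurable X₁')
    (hid : IdentDistrib X₁' (X 0) μ μ)
    (hindep : IndepFun X₁' (fun ω => ((fun j => X j ω), Y ω)) μ) :
    (∫ ω, (Y ω - (g 0 (X₁' ω) + ∑ j ∈ univ.erase 0, g j (X j ω))) ^ 2 ∂μ)
      - (∫ ω, (Y ω - ∑ j, g j (X j ω)) ^ 2 ∂μ)
      = 2 * (cov μ Y (fun ω => g 0 (X 0 ω))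
          - ∑ j ∈ univ.erase 0, cov μ (fun ω => g 0 (X 0 ω)) (fun ω => g j (X j ω))) := by
  classical
  set A : Ω → ℝ := fun ω => g 0 (X 0 ω) with hA
  set A' : Ω → ℝ := fun ω => g 0 (X₁' ω) with hA'
  set S : Ω → ℝ := fun ω => ∑ j ∈ univ.erase 0, g j (X j ω) with hS
  -- basic facts
  have hidA : IdentDistrib A' A μ μ := hid.comp (hgmeas 0)
  have hAL2 : MemLp A 2 μ := hgL2 0
  have hA'L2 : MemLp A' 2 μ := hidA.symm.memLp_snd hAL2
  have hSL2 : MemLp S 2 μ := by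
    have hSe : S = (∑ j ∈ univ.erase (0 : Fin D), fun ω => g j (X j ω)) := by
      funext ω; rw [Finset.sum_apply]
    rw [hSe]
    exact memLp_finset_sum' _ (fun j _ => hgL2 j)
  have hYS : MemLp (fun ω => Y ω - S ω) 2 μ := hY.sub hSL2
  -- independence of A' and (Y - S)
  have hSmeas' : Measurable (fun p : (Fin D → ℝ) × ℝ => p.2 - ∑ j ∈ univ.erase 0, g j (p.1 j)) := by
    apply Measurable.sub measurable_snd
    exact Finset.measurable_sum _ (fun j _ => (hgmeas j).comp ((measurable_pi_apply j).comp measurable_fst))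
  have hindepA' : IndepFun A' (fun ω => Y ω - S ω) μ := by
    have := hindep.comp (φ := g 0)
      (ψ := fun p : (Fin D → ℝ) × ℝ => p.2 - ∑ j ∈ univ.erase 0, g j (p.1 j))
      (hgmeas 0) hSmeas'
    exact this
  -- integral identities
  have hintA' : (∫ ω, A' ω ∂μ) = ∫ ω, A ω ∂μ := hidA.integral_eq
  have hintA'sq : (∫ ω, A' ω ^ 2 ∂μ) = ∫ ω, A ω ^ 2 ∂μ :=
    (hidA.comp (measurable_id.pow_const 2)).integral_eq
  have hprod : (∫ ω, A' ω * (Y ω - S ω) ∂μ)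
      = (∫ ω, A ω ∂μ) * ∫ ω, (Y ω - S ω) ∂μ := by
    rw [← hintA']
    exact hindepA'.integral_mul_eq_mul_integral hA'L2.aestronglyMeasurable hYS.aestronglyMeasurable
  -- integrabilities
  have hYSi : Integrable (fun ω => Y ω - S ω) μ := hYS.integrable (by norm_num)
  have hAi : Integrable A μ := hAL2.integrable (by norm_num)
  have hA'i : Integrable A' μ := hA'L2.integrable (by norm_num)
  have hAsq : Integrable (fun ω => A ω ^ 2) μ := hAL2.integrable_sq
  have hA'sq : Integrable (fun ω => A' ω ^ 2) μ := hA'L2.integrable_sq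
  have hYSsq : Integrable (fun ω => (Y ω - S ω) ^ 2) μ := hYS.integrable_sq
  have hAYS : Integrable (fun ω => A ω * (Y ω - S ω)) μ := memL2_integrable_mul hAL2 hYS
  have hA'YS : Integrable (fun ω => A' ω * (Y ω - S ω)) μ := memL2_integrable_mul hA'L2 hYS
  -- expand both squares as (Y - S - B)^2 = (Y-S)^2 - 2 B (Y-S) + B^2
  have expand : ∀ B : Ω → ℝ, Integrable (fun ω => B ω ^ 2) μ →
      Integrable (fun ω => B ω * (Y ω - S ω)) μ →
      (∫ ω, (Y ω - S ω - B ω) ^ 2 ∂μ)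
        = (∫ ω, (Y ω - S ω) ^ 2 ∂μ) - 2 * (∫ ω, B ω * (Y ω - S ω) ∂μ)
          + ∫ ω, B ω ^ 2 ∂μ := by
    intro B hB2 hBYS
    have : ∀ ω, (Y ω - S ω - B ω) ^ 2
        = (Y ω - S ω) ^ 2 - 2 * (B ω * (Y ω - S ω)) + B ω ^ 2 := by intro ω; ring
    simp_rw [this]
    have hc : Integrable (fun ω => 2 * (B ω * (Y ω - S ω))) μ := hBYS.const_mul 2
    have hd : Integrable (fun ω => (Y ω - S ω) ^ 2 - 2 * (B ω * (Y ω - S ω))) μ :=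
      hYSsq.sub hc
    rw [integral_add hd hB2, integral_sub hYSsq hc, integral_const_mul]
  have e1 : (∫ ω, (Y ω - (A' ω + S ω)) ^ 2 ∂μ)
      = (∫ ω, (Y ω - S ω) ^ 2 ∂μ) - 2 * (∫ ω, A' ω * (Y ω - S ω) ∂μ)
        + ∫ ω, A' ω ^ 2 ∂μ := by
    have : ∀ ω, (Y ω - (A' ω + S ω)) = (Y ω - S ω - A' ω) := by intro ω; ring
    simp_rw [this]
    exact expand A' hA'sq hA'YS
  have e2 : (∫ ω, (Y ω - (A ω + S ω)) ^ 2 ∂μ)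
      = (∫ ω, (Y ω - S ω) ^ 2 ∂μ) - 2 * (∫ ω, A ω * (Y ω - S ω) ∂μ)
        + ∫ ω, A ω ^ 2 ∂μ := by
    have : ∀ ω, (Y ω - (A ω + S ω)) = (Y ω - S ω - A ω) := by intro ω; ring
    simp_rw [this]
    exact expand A hAsq hAYS
  -- rewrite the full sum as A + S
  have hsum : ∀ ω, (∑ j, g j (X j ω)) = A ω + S ω := by
    intro ω
    rw [hA, hS]
    exact (Finset.add_sum_erase univ (fun j => g j (X j ω)) (mem_univ 0)).symm
  have LHS : (∫ ω, (Y ω - (A' ω + S ω)) ^ 2 ∂μ) - (∫ ω, (Y ω - (A ω + S ω)) ^ 2 ∂μ)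
      = 2 * ((∫ ω, A ω * (Y ω - S ω) ∂μ) - (∫ ω, A ω ∂μ) * ∫ ω, (Y ω - S ω) ∂μ) := by
    rw [e1, e2, hintA'sq, hprod]; ring
  -- covariance computations
  have hcovA_YS : cov μ A (fun ω => Y ω - S ω)
      = (∫ ω, A ω * (Y ω - S ω) ∂μ) - (∫ ω, A ω ∂μ) * ∫ ω, (Y ω - S ω) ∂μ :=
    cov_eq hAL2 hYS
  have hcov_split : cov μ A (fun ω => Y ω - S ω)
      = cov μ Y A - ∑ j ∈ univ.erase 0, cov μ A (fun ω => g j (X j ω)) := by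
    have hYi : Integrable Y μ := hY.integrable (by norm_num)
    have hSi : Integrable S μ := hSL2.integrable (by norm_num)
    have hAY : Integrable (fun ω => A ω * Y ω) μ := memL2_integrable_mul hAL2 hY
    have hAS : Integrable (fun ω => A ω * S ω) μ := memL2_integrable_mul hAL2 hSL2
    rw [cov_eq hAL2 hYS, cov_eq hY hAL2, ]
    have h1 : (∫ ω, A ω * (Y ω - S ω) ∂μ) = (∫ ω, A ω * Y ω ∂μ) - ∫ ω, A ω * S ω ∂μ := by
      have : ∀ ω, A ω * (Y ω - S ω) = A ω * Y ω - A ω * S ω := fun ω => by ring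
      simp_rw [this]
      exact integral_sub hAY hAS
    have h2 : (∫ ω, (Y ω - S ω) ∂μ) = (∫ ω, Y ω ∂μ) - ∫ ω, S ω ∂μ := integral_sub hYi hSi
    have h3 : (∫ ω, A ω * S ω ∂μ) = ∑ j ∈ univ.erase 0, ∫ ω, A ω * g j (X j ω) ∂μ := by
      have : ∀ ω, A ω * S ω = ∑ j ∈ univ.erase 0, A ω * g j (X j ω) := by
        intro ω; rw [hS]; exact Finset.mul_sum _ _ _
      simp_rw [this]
      exact integral_finset_sum _ (fun j _ => memL2_integrable_mul hAL2 (hgL2 j))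
    have h4 : (∫ ω, S ω ∂μ) = ∑ j ∈ univ.erase 0, ∫ ω, g j (X j ω) ∂μ := by
      rw [hS]
      exact integral_finset_sum _ (fun j _ => (hgL2 j).integrable (by norm_num))
    have h5 : ∀ j ∈ univ.erase (0 : Fin D), cov μ A (fun ω => g j (X j ω))
        = (∫ ω, A ω * g j (X j ω) ∂μ) - (∫ ω, A ω ∂μ) * ∫ ω, g j (X j ω) ∂μ :=
      fun j _ => cov_eq hAL2 (hgL2 j)
    rw [h1, h2, h3, h4, Finset.sum_congr rfl h5, Finset.sum_sub_distrib, ← Finset.mul_sum]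
    have h6 : (∫ ω, Y ω * A ω ∂μ) = ∫ ω, A ω * Y ω ∂μ := by
      simp_rw [mul_comm]
    rw [h6]
    ring
  calc (∫ ω, (Y ω - (g 0 (X₁' ω) + ∑ j ∈ univ.erase 0, g j (X j ω))) ^ 2 ∂μ)
      - (∫ ω, (Y ω - ∑ j, g j (X j ω)) ^ 2 ∂μ)
      = (∫ ω, (Y ω - (A' ω + S ω)) ^ 2 ∂μ) - (∫ ω, (Y ω - (A ω + S ω)) ^ 2 ∂μ) := by
        simp_rw [hsum]
        rfl
    _ = 2 * ((∫ ω, A ω * (Y ω - S ω) ∂μ) - (∫ ω, A ω ∂μ) * ∫ ω, (Y ω - S ω) ∂μ) := LHS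
    _ = 2 * cov μ A (fun ω => Y ω - S ω) := by rw [hcovA_YS]
    _ = 2 * (cov μ Y A - ∑ j ∈ univ.erase 0, cov μ A (fun ω => g j (X j ω))) := by
        rw [hcov_split]
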